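/- Every countable confluent rewrite relation has a spanning forest: if α is a countable type and r is a confluent binary relation on α, then there exists a relation s on α such that (1) s is a subrelation of r (s a b implies r a b), (2) s is spanning: the conversion relation of s equals the conversion relation of r (a ↔*_s b iff a ↔*_r b for all a, b), (3) s is deterministic: s a b and s a c imply b = c, and (4) s is acyclic: no element is related to itself by the transitive closure of s. -/

import Mathlib

/-- Conversion: reflexive–transitive closure of the symmetric closure. -/
def Conv {α : Type*} (r : α → α → Prop) : α → α → Prop :=
  Relation.ReflTransGen (fun a b => r a b ∨ r b a)

namespace SF
open Relation

attribute [local instance] Classical.propDecidable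

variable {α : Type*}

/-- n-step power of a relation. -/
def pw (ρ : α → α → Prop) : ℕ → α → α → Prop
  | 0 => Eq
  | n+1 => fun a c => ∃ b, ρ a b ∧ pw ρ n b c

lemma pw_rtg {ρ : α → α → Prop} : ∀ {n : ℕ} {a b : α}, pw ρ n a b → ReflTransGen ρ a b := by
  intro n
  induction n with
  | zero => intro a b h; cases h; exact .refl
  | succ n ih => rintro a b ⟨c, hc, hp⟩; exact ReflTransGen.head hc (ih hp)

lemma pw_snoc {ρ : α → α → Prop} : ∀ {n : ℕ} {a b c : α}, pw ρ n a b → ρ b c → pw ρ (n+1) a c := by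
  intro n
  induction n with
  | zero => intro a b c h hbc; cases h; exact ⟨c, hbc, rfl⟩
  | succ n ih => rintro a b c ⟨d, hd, hp⟩ hbc; exact ⟨d, hd, ih hp hbc⟩

lemma rtg_pw {ρ : α → α → Prop} {a b : α} (h : ReflTransGen ρ a b) : ∃ n, pw ρ n a b := by
  induction h with
  | refl => exact ⟨0, rfl⟩
  | tail h1 h2 ih => obtain ⟨n, hn⟩ := ih; exact ⟨n+1, pw_snoc hn h2⟩

/-- shortest pw-length from x to t (0 if unreachable) -/
noncomputable def dst (ρ : α → α → Prop) (x t : α) : ℕ :=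
  if h : ∃ n, pw ρ n x t then Nat.find h else 0

/-- one step along a geodesic from x to t -/
noncomputable def stp (ρ : α → α → Prop) (x t : α) : α :=
  if h : ∃ y, ρ x y ∧ pw ρ (dst ρ x t - 1) y t then h.choose else x

lemma stp_spec {ρ : α → α → Prop} {x t : α} (h : ReflTransGen ρ x t) (hne : x ≠ t) :
    ρ x (stp ρ x t) ∧ ReflTransGen ρ (stp ρ x t) t ∧ dst ρ (stp ρ x t) t < dst ρ x t := by
  obtain ⟨n, hn⟩ := rtg_pw h
  have hex : ∃ n, pw ρ n x t := ⟨n, hn⟩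
  have hd : dst ρ x t = Nat.find hex := by rw [dst, dif_pos hex]
  have hspec : pw ρ (Nat.find hex) x t := Nat.find_spec hex
  have hd0 : Nat.find hex ≠ 0 := by
    intro h0; rw [h0] at hspec; exact hne hspec
  obtain ⟨m, hm⟩ : ∃ m, Nat.find hex = m + 1 :=
    ⟨Nat.find hex - 1, (Nat.succ_pred_eq_of_pos (Nat.pos_of_ne_zero hd0)).symm⟩
  rw [hm] at hspec
  obtain ⟨y, hy1, hy2⟩ := hspec
  have hg : ∃ y, ρ x y ∧ pw ρ (dst ρ x t - 1) y t := ⟨y, hy1, by rw [hd, hm]; simpa using hy2⟩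
  rw [stp, dif_pos hg]
  obtain ⟨h1, h2⟩ := hg.choose_spec
  refine ⟨h1, pw_rtg h2, ?_⟩
  have hle : dst ρ hg.choose t ≤ dst ρ x t - 1 := by
    rw [dst, dif_pos ⟨_, h2⟩]; exact Nat.find_min' _ h2
  have : dst ρ x t = m + 1 := hd.trans hm
  omega

/-- Bundled data: a confluent relation with an enumeration of the carrier. -/
structure Setup (α : Type*) where
  r : α → α → Prop
  q : ℕ → α
  hq : Function.Surjective q
  hconf : ∀ a b c, ReflTransGen r a b → ReflTransGen r a c →
      ∃ d, ReflTransGen r b d ∧ ReflTransGen r c d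

variable (S : Setup α)

lemma rt_conv {x y : α} (h : ReflTransGen S.r x y) : Conv S.r x y :=
  ReflTransGen.mono (fun _ _ h => Or.inl h) _ _ h

lemma conv_symm : Symmetric (Conv S.r) :=
  fun _ _ h => by
    unfold Conv at h ⊢
    induction h with
    | refl => exact .refl
    | tail _ hbc ih => exact ReflTransGen.head hbc.symm ih

/-- Church–Rosser: convertible elements are joinable. -/
lemma cr {x y : α} (h : Conv S.r x y) :
    ∃ d, ReflTransGen S.r x d ∧ ReflTransGen S.r y d := by
  induction h with
  | refl => exact ⟨x, .refl, .refl⟩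
  | @tail b c hxb hbc ih =>
    obtain ⟨d, hxd, hbd⟩ := ih
    rcases hbc with hbc | hcb
    · obtain ⟨e, hde, hce⟩ := S.hconf b d c hbd (.single hbc)
      exact ⟨e, hxd.trans hde, hce⟩
    · exact ⟨d, hxd, (ReflTransGen.single hcb).trans hbd⟩

lemma rep_ex (x : α) : ∃ n, Conv S.r (S.q n) x :=
  let ⟨m, hm⟩ := S.hq x; ⟨m, hm ▸ ReflTransGen.refl⟩

/-- canonical representative of a conversion class -/
noncomputable def rep (x : α) : α := S.q (Nat.find (rep_ex S x))

lemma rep_conv (x : α) : Conv S.r (rep S x) x := Nat.find_spec (rep_ex S x)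

lemma rep_eq {x y : α} (h : Conv S.r x y) : rep S x = rep S y := by
  unfold rep
  congr 1
  apply le_antisymm
  · exact Nat.find_min' (rep_ex S x) ((Nat.find_spec (rep_ex S y)).trans (conv_symm S h))
  · exact Nat.find_min' (rep_ex S y) ((Nat.find_spec (rep_ex S x)).trans h)

lemma rep_idem (x : α) : rep S (rep S x) = rep S x := rep_eq S (rep_conv S x)

lemma rep_rt {x y : α} (h : ReflTransGen S.r x y) : rep S x = rep S y :=
  rep_eq S (rt_conv S h)

/-- cofinal sequence starting from a base point β -/
noncomputable def zs (β : α) : ℕ → α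
  | 0 => β
  | n+1 =>
    if h : ∃ d, ReflTransGen S.r (zs β n) d ∧ ReflTransGen S.r (S.q n) d
    then h.choose else zs β n

lemma zs_step (β : α) (n : ℕ) : ReflTransGen S.r (zs S β n) (zs S β (n+1)) := by
  rw [zs]
  split
  · next h => exact h.choose_spec.1
  · exact .refl

lemma zs_le {β : α} {n m : ℕ} (h : n ≤ m) : ReflTransGen S.r (zs S β n) (zs S β m) := by
  induction h with
  | refl => exact .refl
  | step h ih => exact ih.trans (zs_step S β _)

lemma zs_conv (β : α) (n : ℕ) : Conv S.r β (zs S β n) := by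
  induction n with
  | zero => exact .refl
  | succ n ih => exact ih.trans (rt_conv S (zs_step S β n))

lemma cofinal {β x : α} (h : Conv S.r β x) : ∃ n, ReflTransGen S.r x (zs S β n) := by
  obtain ⟨m, rfl⟩ := S.hq x
  have hj : ∃ d, ReflTransGen S.r (zs S β m) d ∧ ReflTransGen S.r (S.q m) d :=
    cr S ((conv_symm S (zs_conv S β m)).trans h)
  refine ⟨m+1, ?_⟩
  rw [zs, dif_pos hj]
  exact hj.choose_spec.2

/-- level of x relative to base β : least index of the cofinal sequence that x reduces to -/
noncomputable def ph (β x : α) : ℕ :=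
  if h : ∃ n, ReflTransGen S.r x (zs S β n) then Nat.find h else 0

lemma ph_spec {β x : α} (h : Conv S.r β x) :
    ReflTransGen S.r x (zs S β (ph S β x)) := by
  have he := cofinal S h
  rw [ph, dif_pos he]
  exact Nat.find_spec he

lemma ph_min {β x : α} {n : ℕ} (h : ReflTransGen S.r x (zs S β n)) : ph S β x ≤ n := by
  rw [ph, dif_pos ⟨n, h⟩]
  exact Nat.find_min' _ h

lemma ph_mono {β x y : α} (hy : Conv S.r β y) (h : ReflTransGen S.r x y) :
    ph S β x ≤ ph S β y :=
  ph_min S (h.trans (ph_spec S hy))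

/-- the level of any element of the component is "essential" -/
lemma ess {β x : α} (hx : Conv S.r β x) :
    ph S β (zs S β (ph S β x)) = ph S β x :=
  le_antisymm (ph_min S .refl)
    (ph_min S ((ph_spec S hx).trans (ph_spec S (zs_conv S β (ph S β x)))))

/-- r restricted to level v -/
def rL (β : α) (v : ℕ) (a b : α) : Prop := S.r a b ∧ ph S β a = v ∧ ph S β b = v

lemma rL_ph_right {β : α} {v : ℕ} {x y : α} (h : ReflTransGen (rL S β v) x y)
    (hx : ph S β x = v) : ph S β y = v := by
  induction h with
  | refl => exact hx
  | tail _ h2 _ => exact h2.2.2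

lemma rL_sub {β : α} {v : ℕ} {x y : α} (h : ReflTransGen (rL S β v) x y) :
    ReflTransGen S.r x y := ReflTransGen.mono (fun _ _ h => h.1) _ _ h

/-- a reduction between elements of the same level stays inside the level -/
lemma level_path {β : α} {v : ℕ} {y : α} (hy : Conv S.r β y) (hyv : ph S β y = v) :
    ∀ {x : α}, ReflTransGen S.r x y → Conv S.r β x → ph S β x = v →
      ReflTransGen (rL S β v) x y := by
  intro x h
  induction h using ReflTransGen.head_induction_on with
  | refl => intro _ _; exact .refl
  | @head a b hab hby ih =>
    intro hca hpa
    have hcb : Conv S.r β b := hca.trans (rt_conv S (.single hab))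
    have hpb : ph S β b = v := by
      have h1 : ph S β b ≤ v := hyv ▸ ph_mono S hy hby
      have h2 : v ≤ ph S β b := hpa ▸ ph_mono S hcb (.single hab)
      omega
    exact ReflTransGen.head ⟨hab, hpa, hpb⟩ (ih hcb hpb)

/-- from a level-v point that reduces out of level v, there is an in-level path to an exit edge -/
lemma exit_exists {β : α} {v : ℕ} {y : α} (hy : Conv S.r β y) (hyv : ph S β y ≠ v) :
    ∀ {x : α}, ReflTransGen S.r x y → Conv S.r β x → ph S β x = v →
      ∃ c c', ReflTransGen (rL S β v) x c ∧ S.r c c' ∧ ph S β c' ≠ v ∧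
        ReflTransGen S.r c' y := by
  intro x h
  induction h using ReflTransGen.head_induction_on with
  | refl => intro _ hxv; exact absurd hxv hyv
  | @head a b hab hby ih =>
    intro hca hpa
    by_cases hpb : ph S β b = v
    · obtain ⟨c, c', h1, h2, h3, h4⟩ := ih (hca.trans (rt_conv S (.single hab))) hpb
      exact ⟨c, c', ReflTransGen.head ⟨hab, hpa, hpb⟩ h1, h2, h3, h4⟩
    · exact ⟨a, b, .refl, hab, hpb, hby⟩

def hasNext (β : α) (v : ℕ) : Prop := ∃ w, v < w ∧ ph S β (zs S β w) = w

noncomputable def nextE (β : α) (v : ℕ) : ℕ :=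
  if h : hasNext S β v then Nat.find h else v

lemma nextE_spec {β : α} {v : ℕ} (hn : hasNext S β v) :
    v < nextE S β v ∧ ph S β (zs S β (nextE S β v)) = nextE S β v := by
  rw [nextE, dif_pos hn]; exact Nat.find_spec hn

lemma nextE_min {β : α} {v w : ℕ} (hn : hasNext S β v) (h1 : v < w)
    (h2 : ph S β (zs S β w) = w) : nextE S β v ≤ w := by
  rw [nextE, dif_pos hn]; exact Nat.find_min' _ ⟨h1, h2⟩

/-- existence of an exit pair for a non-final essential level -/
def EPp (β : α) (v : ℕ) : Prop :=
  ∃ p : α × α, ReflTransGen (rL S β v) (zs S β v) p.1 ∧ S.r p.1 p.2 ∧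
    v < ph S β p.2 ∧ ReflTransGen S.r p.2 (zs S β (nextE S β v))

noncomputable def exitP (β : α) (v : ℕ) : α × α :=
  if h : EPp S β v then h.choose else (zs S β v, zs S β v)

lemma EPp_holds {β : α} {v : ℕ} (hv : ph S β (zs S β v) = v) (hn : hasNext S β v) :
    EPp S β v := by
  obtain ⟨hlt, hw⟩ := nextE_spec S hn
  have hzw : ReflTransGen S.r (zs S β v) (zs S β (nextE S β v)) := zs_le S hlt.le
  have hyv : ph S β (zs S β (nextE S β v)) ≠ v := by omega
  obtain ⟨c, c', h1, h2, h3, h4⟩ :=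
    exit_exists S (zs_conv S β (nextE S β v)) hyv hzw (zs_conv S β v) hv
  have hrtc' : ReflTransGen S.r (zs S β v) c' := (rL_sub S h1).trans (.single h2)
  have hcc' : Conv S.r β c' := (zs_conv S β v).trans (rt_conv S hrtc')
  have hle : v ≤ ph S β c' := hv ▸ ph_mono S hcc' hrtc'
  exact ⟨(c, c'), h1, h2, lt_of_le_of_ne hle (Ne.symm h3), h4⟩

lemma exitP_spec {β : α} {v : ℕ} (hv : ph S β (zs S β v) = v) (hn : hasNext S β v) :
    ReflTransGen (rL S β v) (zs S β v) (exitP S β v).1 ∧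
    S.r (exitP S β v).1 (exitP S β v).2 ∧
    v < ph S β (exitP S β v).2 ∧
    ReflTransGen S.r (exitP S β v).2 (zs S β (nextE S β v)) := by
  have h := EPp_holds S hv hn
  rw [exitP, dif_pos h]
  exact h.choose_spec

/-- target of routing inside level v -/
noncomputable def tgt (β : α) (v : ℕ) : α :=
  if hasNext S β v then (exitP S β v).1 else zs S β v

/-- the successor function for the spanning forest -/
noncomputable def F (x : α) : α :=
  if hasNext S (rep S x) (ph S (rep S x) x) ∧ x = (exitP S (rep S x) (ph S (rep S x) x)).1
  then (exitP S (rep S x) (ph S (rep S x) x)).2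
  else stp (rL S (rep S x) (ph S (rep S x) x)) x (tgt S (rep S x) (ph S (rep S x) x))

def Root (x : α) : Prop :=
  ¬ hasNext S (rep S x) (ph S (rep S x) x) ∧ x = zs S (rep S x) (ph S (rep S x) x)

def s (x y : α) : Prop := S.r x y ∧ ¬ Root S x ∧ y = F S x

lemma comp_self (x : α) : Conv S.r (rep S x) x := rep_conv S x

lemma ess_self (x : α) :
    ph S (rep S x) (zs S (rep S x) (ph S (rep S x) x)) = ph S (rep S x) x :=
  ess S (comp_self S x)

lemma reach_tgt (x : α) :
    ReflTransGen (rL S (rep S x) (ph S (rep S x) x)) x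
      (tgt S (rep S x) (ph S (rep S x) x)) := by
  have hv := ess_self S x
  have h1 : ReflTransGen (rL S (rep S x) (ph S (rep S x) x)) x
      (zs S (rep S x) (ph S (rep S x) x)) :=
    level_path S (zs_conv S _ _) hv (ph_spec S (comp_self S x)) (comp_self S x) rfl
  rw [tgt]
  split
  · next hn => exact h1.trans (exitP_spec S hv hn).1
  · exact h1

/-- master step lemma -/
lemma F_step {x : α} (hnr : ¬ Root S x) :
    S.r x (F S x) ∧
      ((x = tgt S (rep S x) (ph S (rep S x) x) ∧
        ph S (rep S x) x < ph S (rep S x) (F S x)) ∨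
       (ph S (rep S x) (F S x) = ph S (rep S x) x ∧
        ReflTransGen (rL S (rep S x) (ph S (rep S x) x)) (F S x)
          (tgt S (rep S x) (ph S (rep S x) x)) ∧
        dst (rL S (rep S x) (ph S (rep S x) x)) (F S x)
          (tgt S (rep S x) (ph S (rep S x) x)) <
        dst (rL S (rep S x) (ph S (rep S x) x)) x
          (tgt S (rep S x) (ph S (rep S x) x)))) := by
  have hv := ess_self S x
  by_cases hc : hasNext S (rep S x) (ph S (rep S x) x) ∧
      x = (exitP S (rep S x) (ph S (rep S x) x)).1
  · rw [F, if_pos hc]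
    obtain ⟨e1, e2, e3, e4⟩ := exitP_spec S hv hc.1
    rw [← hc.2] at e2
    refine ⟨e2, Or.inl ⟨?_, e3⟩⟩
    rw [tgt, if_pos hc.1]
    exact hc.2
  · rw [F, if_neg hc]
    have hne : x ≠ tgt S (rep S x) (ph S (rep S x) x) := by
      rw [tgt]
      split
      · next hn => intro h; exact hc ⟨hn, h⟩
      · next hn => intro h; exact hnr ⟨hn, h⟩
    obtain ⟨h1, h2, h3⟩ := stp_spec (reach_tgt S x) hne
    exact ⟨h1.1, Or.inr ⟨h1.2.2, h2, h3⟩⟩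

lemma s_rep {x y : α} (h : s S x y) : rep S x = rep S y :=
  rep_rt S (.single h.1)

/-- measure decrease along s -/
lemma s_dec {x y : α} (h : s S x y) :
    ph S (rep S x) x < ph S (rep S x) y ∨
      (ph S (rep S x) y = ph S (rep S x) x ∧
        dst (rL S (rep S x) (ph S (rep S x) x)) y
          (tgt S (rep S x) (ph S (rep S x) x)) <
        dst (rL S (rep S x) (ph S (rep S x) x)) x
          (tgt S (rep S x) (ph S (rep S x) x))) := by
  obtain ⟨hr, hnr, hFy⟩ := h
  subst hFy
  rcases (F_step S hnr).2 with ⟨_, h2⟩ | ⟨h1, _, h3⟩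
  · exact Or.inl h2
  · exact Or.inr ⟨h1, h3⟩

lemma trans_dec {x y : α} (h : TransGen (s S) x y) :
    rep S x = rep S y ∧
      (ph S (rep S x) x < ph S (rep S x) y ∨
        (ph S (rep S x) y = ph S (rep S x) x ∧
          dst (rL S (rep S x) (ph S (rep S x) x)) y
            (tgt S (rep S x) (ph S (rep S x) x)) <
          dst (rL S (rep S x) (ph S (rep S x) x)) x
            (tgt S (rep S x) (ph S (rep S x) x)))) := by
  induction h with
  | single h1 => exact ⟨s_rep S h1, s_dec S h1⟩
  | @tail b c h1 h2 ih =>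
    obtain ⟨hrep, hm⟩ := ih
    have hrep2 : rep S b = rep S c := s_rep S h2
    have hm2 := s_dec S h2
    rw [← hrep] at hm2
    refine ⟨hrep.trans hrep2, ?_⟩
    rcases hm with hlt | ⟨heq, hd⟩
    · rcases hm2 with hlt2 | ⟨heq2, hd2⟩
      · left; omega
      · left; omega
    · rw [heq] at hm2
      rcases hm2 with hlt2 | ⟨heq2, hd2⟩
      · left; omega
      · right; exact ⟨heq2, by omega⟩

lemma s_acyclic (a : α) : ¬ TransGen (s S) a a := by
  intro h
  obtain ⟨_, hm⟩ := trans_dec S h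
  rcases hm with h | ⟨_, h⟩ <;> omega

/-- every element s-reaches its level target -/
lemma reach_aux : ∀ (n : ℕ) (x : α),
    dst (rL S (rep S x) (ph S (rep S x) x)) x (tgt S (rep S x) (ph S (rep S x) x)) < n →
    ReflTransGen (s S) x (tgt S (rep S x) (ph S (rep S x) x)) := by
  intro n
  induction n with
  | zero => intro x hx; omega
  | succ n ih =>
    intro x hx
    by_cases he : x = tgt S (rep S x) (ph S (rep S x) x)
    · exact he ▸ ReflTransGen.refl
    · have hnr : ¬ Root S x := by
        intro hr
        apply he
        rw [tgt, if_neg hr.1]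
        exact hr.2
      obtain ⟨h1, h2⟩ := F_step S hnr
      rcases h2 with ⟨heq, _⟩ | ⟨hph, hrt, hdec⟩
      · exact absurd heq he
      · have hrep : rep S (F S x) = rep S x := (rep_rt S (.single h1)).symm
        have hthis := ih (F S x) (by rw [hrep, hph]; omega)
        rw [hrep, hph] at hthis
        exact ReflTransGen.head ⟨h1, hnr, rfl⟩ hthis

lemma reach (x : α) : ReflTransGen (s S) x (tgt S (rep S x) (ph S (rep S x) x)) :=
  reach_aux S _ x (Nat.lt_succ_self _)

lemma s_conv_of_rtg {x y : α} (h : ReflTransGen (s S) x y) : Conv (s S) x y :=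
  ReflTransGen.mono (fun _ _ h => Or.inl h) _ _ h

lemma conv_s_symm : Symmetric (Conv (s S)) :=
  fun _ _ h => by
    unfold Conv at h ⊢
    induction h with
    | refl => exact .refl
    | tail _ hbc ih => exact ReflTransGen.head hbc.symm ih

/-- essential targets along a component are all s-convertible -/
lemma chainC (β : α) (hβ : rep S β = β) : ∀ (k v w : ℕ),
    ph S β (zs S β v) = v → ph S β (zs S β w) = w → v ≤ w → w - v ≤ k →
    Conv (s S) (tgt S β v) (tgt S β w) := by
  intro k
  induction k with
  | zero =>
    intro v w hv hw hle hk
    have : v = w := by omega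
    subst this
    exact .refl
  | succ k ih =>
    intro v w hv hw hle hk
    rcases eq_or_lt_of_le hle with rfl | hlt
    · exact .refl
    · have hn : hasNext S β v := ⟨w, hlt, hw⟩
      obtain ⟨e1, e2, e3, e4⟩ := exitP_spec S hv hn
      have hphc : ph S β (exitP S β v).1 = v := rL_ph_right S e1 hv
      have hcvc : Conv S.r β (exitP S β v).1 := (zs_conv S β v).trans (rt_conv S (rL_sub S e1))
      have hrepc : rep S (exitP S β v).1 = β := (rep_eq S hcvc).symm.trans hβ
      have hroot : ¬ Root S (exitP S β v).1 := fun hr =>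
        hr.1 (by rw [hrepc, hphc]; exact hn)
      have hF : F S (exitP S β v).1 = (exitP S β v).2 := by
        have hcond : hasNext S (rep S (exitP S β v).1) (ph S (rep S (exitP S β v).1) (exitP S β v).1) ∧
            (exitP S β v).1 = (exitP S (rep S (exitP S β v).1) (ph S (rep S (exitP S β v).1) (exitP S β v).1)).1 := by
          rw [hrepc, hphc]
          exact ⟨hn, rfl⟩
        rw [F, if_pos hcond, hrepc, hphc]
      have hscc : s S (exitP S β v).1 (exitP S β v).2 := ⟨e2, hroot, hF.symm⟩
      have htv : tgt S β v = (exitP S β v).1 := by rw [tgt, if_pos hn]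
      have hcc' : Conv S.r β (exitP S β v).2 := hcvc.trans (rt_conv S (.single e2))
      have hrepc' : rep S (exitP S β v).2 = β := (rep_eq S hcc').symm.trans hβ
      have hv' : ph S β (zs S β (ph S β (exitP S β v).2)) = ph S β (exitP S β v).2 :=
        ess S hcc'
      have hnle : nextE S β v ≤ w := nextE_min S hn hlt hw
      have hv'le : ph S β (exitP S β v).2 ≤ nextE S β v := by
        have h1 : ph S β (zs S β (nextE S β v)) = nextE S β v := (nextE_spec S hn).2
        have h2 := ph_mono S (zs_conv S β (nextE S β v)) e4
        omega
      have hreach : ReflTransGen (s S) (exitP S β v).2 (tgt S β (ph S β (exitP S β v).2)) := by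
        have h := reach S (exitP S β v).2
        rw [hrepc'] at h
        exact h
      have h1 : Conv (s S) (tgt S β v) (tgt S β (ph S β (exitP S β v).2)) := by
        rw [htv]
        exact ReflTransGen.head (Or.inl hscc) (s_conv_of_rtg S hreach)
      have h2 : Conv (s S) (tgt S β (ph S β (exitP S β v).2)) (tgt S β w) :=
        ih (ph S β (exitP S β v).2) w hv' hw (by omega) (by omega)
      exact h1.trans h2

/-- the main construction -/
theorem main (S : Setup α) :
    ∃ s : α → α → Prop,
      (∀ a b, s a b → S.r a b) ∧
      (∀ a b, Conv s a b ↔ Conv S.r a b) ∧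
      (∀ a b c, s a b → s a c → b = c) ∧
      (∀ a, ¬ TransGen s a a) := by
  refine ⟨s S, fun a b h => h.1, ?_, fun a b c h1 h2 => h1.2.2.trans h2.2.2.symm, s_acyclic S⟩
  intro a b
  constructor
  · intro h
    exact ReflTransGen.mono (fun _ _ h => h.imp (·.1) (·.1)) _ _ h
  · intro h
    have hrep : rep S a = rep S b := rep_eq S h
    have hEa := ess_self S a
    have hEb := ess_self S b
    rw [← hrep] at hEb
    have hA : Conv (s S) a (tgt S (rep S a) (ph S (rep S a) a)) :=
      s_conv_of_rtg S (reach S a)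
    have hB : Conv (s S) b (tgt S (rep S a) (ph S (rep S a) b)) := by
      have := s_conv_of_rtg S (reach S b)
      rw [← hrep] at this
      exact this
    have hidem := rep_idem S a
    rcases le_total (ph S (rep S a) a) (ph S (rep S a) b) with hle | hle
    · have hmid := chainC S (rep S a) hidem (ph S (rep S a) b - ph S (rep S a) a)
        (ph S (rep S a) a) (ph S (rep S a) b) hEa hEb hle le_rfl
      exact (hA.trans hmid).trans (conv_s_symm S hB)
    · have hmid := chainC S (rep S a) hidem (ph S (rep S a) a - ph S (rep S a) b)
        (ph S (rep S a) b) (ph S (rep S a) a) hEb hEa hle le_rfl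
      exact (hA.trans (conv_s_symm S hmid)).trans (conv_s_symm S hB)

end SF

/-- Every countable confluent rewrite relation has a spanning forest. -/
theorem stmt_2 {α : Type*} [Countable α] (r : α → α → Prop)
    (hconf : ∀ a b c, Relation.ReflTransGen r a b → Relation.ReflTransGen r a c →
      ∃ d, Relation.ReflTransGen r b d ∧ Relation.ReflTransGen r c d) :
    ∃ s : α → α → Prop,
      (∀ a b, s a b → r a b) ∧
      (∀ a b, Conv s a b ↔ Conv r a b) ∧
      (∀ a b c, s a b → s a c → b = c) ∧
      (∀ a, ¬ Relation.TransGen s a a) := by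
  rcases isEmpty_or_nonempty α with hα | hα
  · exact ⟨fun _ _ => False, fun a => isEmptyElim a, fun a => isEmptyElim a,
      fun a => isEmptyElim a, fun a => isEmptyElim a⟩
  · obtain ⟨q, hq⟩ := exists_surjective_nat α
    exact SF.main ⟨r, q, hq, hconf⟩
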